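/- Let W₀ →_{ρ₁} ⋯ →_{ρ_l} W_l be a reduced computation of 𝓜 with base k₁q₂k₂ in which every rule ρ_j is of age (1) or (6) (resp. every rule is of age (2) or (5)). Then there exists an integer d with 0 ≤ d ≤ l such that |W₀| > |W₁| > ⋯ > |W_d| (resp. |W₀| ≥ |W₁| ≥ ⋯ ≥ |W_d|) and |W_d| < |W_{d+1}| < ⋯ < |W_l| (resp. |W_d| ≤ |W_{d+1}| ≤ ⋯ ≤ |W_l|). -/

import Mathlib

set_option maxHeartbeats 1000000

namespace SM

/-! ### Generic S-machine framework

Words are lists of (letter, sign) pairs; `true` is a positive occurrence.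
An S-machine has state letters (`Q`) and tape letters (`Y`).  Each state
letter has a sector index on its left (`ls`) and on its right (`rs`);
sector `s` carries the tape alphabet `inY s`. -/

abbrev Wrd (Y : Type) := List (Y × Bool)

def wInv {Y : Type} (w : Wrd Y) : Wrd Y := w.reverse.map fun x => (x.1, !x.2)

def IsReduced {Y : Type} (w : Wrd Y) : Prop :=
  List.Chain' (fun a b => ¬ (b.1 = a.1 ∧ b.2 = !a.2)) w

structure Machine (Q Y : Type) where
  ls : Q → ℕ
  rs : Q → ℕ
  inY : ℕ → Y → Prop

/-- A rule replaces each state letter `q` in its domain by a word `u q' v`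
(`act q = some (u, q', v)`), and carries the subsets `Y_i(θ)` (`ys`). -/
structure Rule (Q Y : Type) where
  act : Q → Option (Wrd Y × Q × Wrd Y)
  ys : ℕ → Y → Prop

/-- Sector to the right of an occurrence of a state letter. -/
def secR {Q Y : Type} (M : Machine Q Y) (x : Q × Bool) : ℕ :=
  if x.2 then M.rs x.1 else M.ls x.1

/-- Sector to the left of an occurrence of a state letter. -/
def secL {Q Y : Type} (M : Machine Q Y) (x : Q × Bool) : ℕ :=
  if x.2 then M.ls x.1 else M.rs x.1

def qd {Q : Type} [Inhabited Q] (l : List (Q × Bool)) (j : ℕ) : Q × Bool :=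
  l.getD j (default, true)

/-- An admissible word: state-letter occurrences `qs` (the base) alternating
with reduced tape words `tapes`, with consistent sectors, each tape word
over the alphabet of its sector, and the whole word freely reduced. -/
structure AdmWord {Q Y : Type} [Inhabited Q] (M : Machine Q Y) where
  qs : List (Q × Bool)
  tapes : List (Wrd Y)
  qs_ne : qs ≠ []
  hlen : tapes.length + 1 = qs.length
  consist : ∀ j, j + 1 < qs.length → secR M (qd qs j) = secL M (qd qs (j + 1))
  alph : ∀ j, j + 1 < qs.length → ∀ x ∈ tapes.getD j [], M.inY (secR M (qd qs j)) x.1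
  tred : ∀ j, IsReduced (tapes.getD j [])
  qred : ∀ j, j + 1 < qs.length → (qd qs (j + 1)).1 = (qd qs j).1 →
      (qd qs (j + 1)).2 = !(qd qs j).2 → tapes.getD j [] ≠ []

/-- `|W|_a` : the number of tape letters of `W`. -/
def alen {Q Y : Type} [Inhabited Q] {M : Machine Q Y} (W : AdmWord M) : ℕ :=
  (W.tapes.map List.length).sum

/-- `|W|` : the length of `W`. -/
def wlen {Q Y : Type} [Inhabited Q] {M : Machine Q Y} (W : AdmWord M) : ℕ :=
  W.qs.length + alen W

/-- Replacement of a single (signed) state-letter occurrence by a rule. -/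
def occRepl {Q Y : Type} (r : Rule Q Y) : Q × Bool → Option (Wrd Y × (Q × Bool) × Wrd Y)
  | (q, true) => (r.act q).map fun x => (x.1, (x.2.1, true), x.2.2)
  | (q, false) => (r.act q).map fun x => (wInv x.2.2, (x.2.1, false), wInv x.1)

/-- `Step M r W W'` : the rule `r` is applicable to `W` and `W' = r · W`. -/
def Step {Q Y : Type} [Inhabited Q] (M : Machine Q Y) (r : Rule Q Y)
    (W W' : AdmWord M) : Prop :=
  W.qs.length = W'.qs.length ∧
  (∀ j, j + 1 < W.qs.length → ∀ x ∈ W.tapes.getD j [], r.ys (secR M (qd W.qs j)) x.1) ∧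
  (∀ j, j < W.qs.length → ∃ u v, occRepl r (qd W.qs j) = some (u, qd W'.qs j, v)) ∧
  (∀ j, j + 1 < W.qs.length → ∀ u v u' v',
    occRepl r (qd W.qs j) = some (u, qd W'.qs j, v) →
    occRepl r (qd W.qs (j + 1)) = some (u', qd W'.qs (j + 1), v') →
    FreeGroup.mk (W'.tapes.getD j []) = FreeGroup.mk (v ++ W.tapes.getD j [] ++ u'))

/-! ### The machine `Z(A)`

State letters `L, p(1), p(2), p(3), R`; sector `0` is the `Lp`-sector with
alphabet `A₀ ∪ A₁`, sector `1` is the `pR`-sector with alphabet `A₀`.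
A tape letter is a pair `(a, i)` with `i = false` for `a₀ ∈ A₀` and
`i = true` for `a₁ ∈ A₁`. -/

inductive ZQ
  | L | p1 | p2 | p3 | R
deriving DecidableEq, Inhabited

abbrev ZY (A : Type) := A × Bool

def ZM (A : Type) : Machine ZQ (ZY A) where
  ls := fun q => match q with | .L => 9 | .R => 1 | _ => 0
  rs := fun q => match q with | .L => 0 | .R => 9 | _ => 1
  inY := fun s y => s = 0 ∨ (s = 1 ∧ y.2 = false)

inductive ZRulN (A : Type)
  | r1 (a : A) | r12 (a : A) | r2 (a : A) | r21 | r13 | r3 (a : A)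
deriving DecidableEq

/-- A rule of `Z(A)`: a rule name together with an inversion flag. -/
abbrev ZRul (A : Type) := ZRulN A × Bool

def zinv (A : Type) : ZRul A → ZRul A := fun x => (x.1, !x.2)

/-- Action of the positive rules of `Z(A)` on state letters. -/
def zactN (A : Type) : ZRulN A → ZQ → Option (Wrd (ZY A) × ZQ × Wrd (ZY A))
  | _, .L => some ([], .L, [])
  | _, .R => some ([], .R, [])
  | .r1 a, .p1 => some ([((a, true), false)], .p1, [((a, false), true)])
  | .r12 a, .p1 => some ([((a, false), false), ((a, true), true)], .p2, [])
  | .r2 a, .p2 => some ([((a, false), true)], .p2, [((a, false), false)])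
  | .r21, .p2 => some ([], .p1, [])
  | .r13, .p1 => some ([], .p3, [])
  | .r3 a, .p3 => some ([((a, false), true)], .p3, [((a, false), false)])
  | _, _ => none

/-- Action of the rules of `Z(A)` (including inverse rules). -/
def zact (A : Type) : ZRul A → ZQ → Option (Wrd (ZY A) × ZQ × Wrd (ZY A))
  | (n, false), q => zactN A n q
  | (_, true), .L => some ([], .L, [])
  | (_, true), .R => some ([], .R, [])
  | (.r1 a, true), .p1 => some ([((a, true), true)], .p1, [((a, false), false)])
  | (.r12 a, true), .p2 => some ([((a, true), false), ((a, false), true)], .p1, [])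
  | (.r2 a, true), .p2 => some ([((a, false), false)], .p2, [((a, false), true)])
  | (.r21, true), .p1 => some ([], .p2, [])
  | (.r13, true), .p3 => some ([], .p1, [])
  | (.r3 a, true), .p3 => some ([((a, false), false)], .p3, [((a, false), true)])
  | (_, true), _ => none

/-- The sets `Y_i(θ)` of the rules of `Z(A)`. -/
def zysN (A : Type) : ZRulN A → ℕ → ZY A → Prop
  | .r21, s, _ => s = 0
  | .r13, s, y => s = 1 ∧ y.2 = false
  | .r3 _, s, y => (s = 0 ∨ s = 1) ∧ y.2 = false
  | _, s, y => s = 0 ∨ (s = 1 ∧ y.2 = false)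

def zys (A : Type) (r : ZRul A) : ℕ → ZY A → Prop := zysN A r.1

def zrule (A : Type) (r : ZRul A) : Rule ZQ (ZY A) := ⟨zact A r, zys A r⟩

/-- A reduced computation of the machine `Z(A)`:
`W 0 →_{h 0} W 1 →_{h 1} ⋯ →_{h (t-1)} W t` with freely reduced history. -/
structure ZComp (A : Type) where
  t : ℕ
  W : ℕ → AdmWord (ZM A)
  h : ℕ → ZRul A
  steps : ∀ i, i < t → Step (ZM A) (zrule A (h i)) (W i) (W (i + 1))
  red : ∀ i, i + 1 < t → h (i + 1) ≠ zinv A (h i)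

def isP (q : ZQ) : Prop := q = .p1 ∨ q = .p2 ∨ q = .p3

def baseLpR {A : Type} (W : AdmWord (ZM A)) : Prop :=
  ∃ p, isP p ∧ W.qs = [(ZQ.L, true), (p, true), (ZQ.R, true)]

def baseIPR {A : Type} (W : AdmWord (ZM A)) : Prop :=
  ∃ p p', isP p ∧ isP p' ∧ W.qs = [(p, false), (p', true), (ZQ.R, true)]

/-- For a three-letter base ending with `R`: `W` contains the subword `st·R`. -/
def hasPR {A : Type} (W : AdmWord (ZM A)) (st : ZQ) : Prop :=
  qd W.qs 1 = (st, true) ∧ W.tapes.getD 1 [] = []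

/-- All tape letters of `W` lie in `A₀^{±1}`. -/
def allA0 {A : Type} (W : AdmWord (ZM A)) : Prop :=
  ∀ j, ∀ x ∈ W.tapes.getD j [], x.1.2 = false

/-- `u` is a positive word over `A₀`. -/
def Pos0 {A : Type} (u : Wrd (ZY A)) : Prop :=
  ∀ x ∈ u, x.2 = true ∧ x.1.2 = false

/-- Projection of a tape word onto `A` (sending `a₀, a₁` to `a`). -/
def projA {A : Type} (w : Wrd (ZY A)) : Wrd A := w.map fun x => (x.1.1, x.2)

/-! ### The machine `𝓜`

Five state letters in the cyclic order `k₀, q₁, k₁, q₂, k₂`.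
Sectors: `0 = k₀q₁` (alphabet `{a₀, a₁}`), `1 = q₁k₁` (alphabet `{a₀}`),
`2 = k₁q₂` (alphabet `A(Υ)₀`), `3 = q₂k₂` (alphabet `A(Υ)₀ ∪ A(Υ)₁`),
`4 = k₂k₀` (empty alphabet), where `Υ` is the set of rules of `Z({a})`.

`q1Z st ag` is the state `q₁(st)^{ag}` (with `ag ∈ {1,2,5,6}`, `st ∈ {1,2,3}`),
`q1M ag` is `q₁^{ag}` (`ag ∈ {3,4}`), `q2M st ag` is `q₂(st)^{ag}` (`ag ∈ {3,4}`),
`q2Z ag` is `q₂^{ag}` (`ag ∈ {1,2,5,6}`). -/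

inductive MQ
  | k0 | k1 | k2
  | q1Z (st : ℕ) (ag : ℕ)
  | q1M (ag : ℕ)
  | q2M (st : ℕ) (ag : ℕ)
  | q2Z (ag : ℕ)
deriving DecidableEq, Inhabited

/-- Tape letters of `𝓜`: `sa i` is `a_i` (`a₀`/`a₁`); `su τ i` is the copy
of the letter `a_τ` (`τ ∈ Υ`) in `A(Υ)_i`. -/
inductive MY
  | sa (i : Bool)
  | su (r : ZRul Unit) (i : Bool)
deriving DecidableEq

def MM : Machine MQ MY where
  ls := fun q => match q with
    | .k0 => 4 | .k1 => 1 | .k2 => 3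
    | .q1Z _ _ => 0 | .q1M _ => 0
    | .q2M _ _ => 2 | .q2Z _ => 2
  rs := fun q => match q with
    | .k0 => 0 | .k1 => 2 | .k2 => 4
    | .q1Z _ _ => 1 | .q1M _ => 1
    | .q2M _ _ => 3 | .q2Z _ => 3
  inY := fun s y => match y with
    | .sa i => s = 0 ∨ (s = 1 ∧ i = false)
    | .su _ i => (s = 2 ∧ i = false) ∨ s = 3

/-- Rules of `𝓜`.  `ag1 τ b` is `(τ¹)^{±1}` (`b` the inversion flag), etc.
For ages (3), (4) the inverse of `τ³` is `(τ⁻¹)³`, so no flag is needed.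
`c12 b, …` are the connecting rules `(r¹²)^{±1}, …`. -/
inductive MRul
  | ag1 (τ : ZRul Unit) (b : Bool)
  | ag2 (τ : ZRul Unit) (b : Bool)
  | ag5 (τ : ZRul Unit) (b : Bool)
  | ag6 (τ : ZRul Unit) (b : Bool)
  | ag3 (τ : ZRul (ZRul Unit))
  | ag4 (τ : ZRul (ZRul Unit))
  | c12 (b : Bool)
  | c23 (b : Bool)
  | c34 (b : Bool)
  | c45 (b : Bool)
  | c56 (b : Bool)
deriving DecidableEq

def minv : MRul → MRul
  | .ag1 τ b => .ag1 τ (!b)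
  | .ag2 τ b => .ag2 τ (!b)
  | .ag5 τ b => .ag5 τ (!b)
  | .ag6 τ b => .ag6 τ (!b)
  | .ag3 τ => .ag3 (zinv _ τ)
  | .ag4 τ => .ag4 (zinv _ τ)
  | .c12 b => .c12 (!b)
  | .c23 b => .c23 (!b)
  | .c34 b => .c34 (!b)
  | .c45 b => .c45 (!b)
  | .c56 b => .c56 (!b)

def pOf : ℕ → ZQ
  | 1 => .p1 | 2 => .p2 | 3 => .p3 | _ => .R

def stOf : ZQ → Option ℕ
  | .p1 => some 1 | .p2 => some 2 | .p3 => some 3 | _ => none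

def cva (x : (Unit × Bool) × Bool) : MY × Bool := (.sa x.1.2, x.2)

def cvu (x : (ZRul Unit × Bool) × Bool) : MY × Bool := (.su x.1.1 x.1.2, x.2)

/-- A rule `τ` of `Z({a})` acting on `(k₀, q₁, k₁)` exactly as `τ` acts on
`(L, p, R)`, the states of `q₁` carrying the age tag `ag`. -/
def leftAct (τ : ZRul Unit) (ag : ℕ) : MQ → Option (Wrd MY × MQ × Wrd MY)
  | .k0 => some ([], .k0, [])
  | .k1 => some ([], .k1, [])
  | .q1Z st ag' =>
      if ag' = ag then
        match zact Unit τ (pOf st) with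
        | some x =>
            match stOf x.2.1 with
            | some st' => some (x.1.map cva, .q1Z st' ag, x.2.2.map cva)
            | none => none
        | none => none
      else none
  | _ => none

/-- The mirror version of the action of a rule of `Z(B)`. -/
def zmirAct (B : Type) (τ : ZRul B) (q : ZQ) : Option (Wrd (ZY B) × ZQ × Wrd (ZY B)) :=
  (zact B τ q).map fun x => (x.2.2.reverse, x.2.1, x.1.reverse)

/-- The sets `Y_i(θ)` for the mirror machine `Z(B, mir)`
(sector `0` has alphabet `B₀`, sector `1` has alphabet `B₀ ∪ B₁`). -/
def zmirYs (B : Type) (τ : ZRul B) (s : ℕ) (y : ZY B) : Prop :=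
  match τ.1 with
  | .r21 => s = 1
  | .r13 => s = 0 ∧ y.2 = false
  | .r3 _ => (s = 0 ∨ s = 1) ∧ y.2 = false
  | _ => (s = 0 ∧ y.2 = false) ∨ s = 1

/-- A rule `τ` of `Z(A(Υ), mir)` acting on `(k₁, q₂, k₂)` exactly as `τ` acts
on `(L, p, R)`, leaving `k₀` and `q₁^{ag}` unchanged. -/
def rightAct (τ : ZRul (ZRul Unit)) (ag : ℕ) : MQ → Option (Wrd MY × MQ × Wrd MY)
  | .k0 => some ([], .k0, [])
  | .k1 => some ([], .k1, [])
  | .k2 => some ([], .k2, [])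
  | .q1M ag' => if ag' = ag then some ([], .q1M ag, []) else none
  | .q2M st ag' =>
      if ag' = ag then
        match zmirAct (ZRul Unit) τ (pOf st) with
        | some x =>
            match stOf x.2.1 with
            | some st' => some (x.1.map cvu, .q2M st' ag, x.2.2.map cvu)
            | none => none
        | none => none
      else none
  | _ => none

/-- Action of a connecting rule (`b` is the inversion flag): `k`-letters are
unchanged, `x ↦ x'` and `y ↦ y'` are the state changes of `q₁` and `q₂`. -/
def connAct (b : Bool) (x x' y y' : MQ) (q : MQ) : Option (Wrd MY × MQ × Wrd MY) :=
  if q = .k0 ∨ q = .k1 ∨ q = .k2 then some ([], q, [])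
  else if q = cond b x' x then some ([], cond b x x', [])
  else if q = cond b y' y then some ([], cond b y y', [])
  else none

def mact : MRul → MQ → Option (Wrd MY × MQ × Wrd MY)
  | .ag1 τ b, .q2Z 1 => some ([(.su τ false, !b)], .q2Z 1, [])
  | .ag1 _ _, .k2 => some ([], .k2, [])
  | .ag1 τ b, q => leftAct (cond b (zinv Unit τ) τ) 1 q
  | .ag2 τ b, .q2Z 2 => some ([(.su τ false, !b)], .q2Z 2, [(.su τ false, b)])
  | .ag2 _ _, .k2 => some ([], .k2, [])
  | .ag2 τ b, q => leftAct (cond b (zinv Unit τ) τ) 2 q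
  | .ag5 τ b, .q2Z 5 => some ([(.su τ false, b)], .q2Z 5, [(.su τ false, !b)])
  | .ag5 _ _, .k2 => some ([], .k2, [])
  | .ag5 τ b, q => leftAct (cond b (zinv Unit τ) τ) 5 q
  | .ag6 τ b, .q2Z 6 => some ([], .q2Z 6, [(.su τ false, !b)])
  | .ag6 _ _, .k2 => some ([], .k2, [])
  | .ag6 τ b, q => leftAct (cond b (zinv Unit τ) τ) 6 q
  | .ag3 τ, q => rightAct τ 3 q
  | .ag4 τ, q => rightAct τ 4 q
  | .c12 b, q => connAct b (.q1Z 3 1) (.q1Z 3 2) (.q2Z 1) (.q2Z 2) q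
  | .c23 b, q => connAct b (.q1Z 1 2) (.q1M 3) (.q2Z 2) (.q2M 1 3) q
  | .c34 b, q => connAct b (.q1M 3) (.q1M 4) (.q2M 3 3) (.q2M 3 4) q
  | .c45 b, q => connAct b (.q1M 4) (.q1Z 1 5) (.q2M 1 4) (.q2Z 5) q
  | .c56 b, q => connAct b (.q1Z 3 5) (.q1Z 3 6) (.q2Z 5) (.q2Z 6) q

def mys : MRul → ℕ → MY → Prop
  | .ag1 τ _, s, .sa i => zys Unit τ s ((), i)
  | .ag1 _ _, s, .su _ i => s = 2 ∧ i = false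
  | .ag2 τ _, s, .sa i => zys Unit τ s ((), i)
  | .ag2 _ _, s, .su _ i => (s = 2 ∨ s = 3) ∧ i = false
  | .ag5 τ _, s, .sa i => zys Unit τ s ((), i)
  | .ag5 _ _, s, .su _ i => (s = 2 ∨ s = 3) ∧ i = false
  | .ag6 τ _, s, .sa i => zys Unit τ s ((), i)
  | .ag6 _ _, s, .su _ i => s = 3 ∧ i = false
  | .ag3 τ, s, .sa i => s = 0 ∧ i = false
  | .ag3 τ, s, .su r i => (s = 2 ∧ zmirYs (ZRul Unit) τ 0 (r, i)) ∨
      (s = 3 ∧ zmirYs (ZRul Unit) τ 1 (r, i))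
  | .ag4 τ, s, .sa i => s = 0 ∧ i = false
  | .ag4 τ, s, .su r i => (s = 2 ∧ zmirYs (ZRul Unit) τ 0 (r, i)) ∨
      (s = 3 ∧ zmirYs (ZRul Unit) τ 1 (r, i))
  | .c12 _, s, .sa i => s = 0 ∧ i = false
  | .c12 _, s, .su _ i => s = 2 ∧ i = false
  | .c23 _, s, .sa i => s = 0 ∧ i = false
  | .c23 _, s, .su _ i => s = 3 ∧ i = false
  | .c34 _, s, .sa i => s = 0 ∧ i = false
  | .c34 _, s, .su _ i => s = 3 ∧ i = false
  | .c45 _, s, .sa i => s = 0 ∧ i = false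
  | .c45 _, s, .su _ i => s = 3 ∧ i = false
  | .c56 _, s, .sa i => s = 0 ∧ i = false
  | .c56 _, s, .su _ i => s = 2 ∧ i = false

def mrule (r : MRul) : Rule MQ MY := ⟨mact r, mys r⟩

/-- A reduced computation of the machine `𝓜`. -/
structure MComp where
  t : ℕ
  W : ℕ → AdmWord MM
  h : ℕ → MRul
  steps : ∀ i, i < t → Step MM (mrule (h i)) (W i) (W (i + 1))
  red : ∀ i, i + 1 < t → h (i + 1) ≠ minv (h i)

inductive Age
  | a1 | a12 | a2 | a23 | a3 | a34 | a4 | a45 | a5 | a56 | a6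
deriving DecidableEq

def age : MRul → Age
  | .ag1 _ _ => .a1
  | .ag2 _ _ => .a2
  | .ag5 _ _ => .a5
  | .ag6 _ _ => .a6
  | .ag3 _ => .a3
  | .ag4 _ => .a4
  | .c12 _ => .a12
  | .c23 _ => .a23
  | .c34 _ => .a34
  | .c45 _ => .a45
  | .c56 _ => .a56

def IsConn (r : MRul) : Prop :=
  age r = .a12 ∨ age r = .a23 ∨ age r = .a34 ∨ age r = .a45 ∨ age r = .a56

def hist (c : MComp) : List MRul := (List.range c.t).map c.h

/-- The brief history of a history: each maximal block of consecutive rules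
of the same age is replaced by that age symbol. -/
def briefOf (l : List MRul) : List Age := (l.map age).destutter (· ≠ ·)

def brief (c : MComp) : List Age := briefOf (hist c)

def longWord : List Age :=
  [.a1, .a12, .a2, .a23, .a3, .a34, .a4, .a45, .a5, .a56, .a6]

/-- A computation is long if the brief history of the computation or of the
inverse computation contains `(1)(12)(2)(23)(3)(34)(4)(45)(5)(56)(6)`. -/
def IsLong (c : MComp) : Prop :=
  longWord <:+: brief c ∨ longWord <:+: briefOf ((hist c).reverse.map minv)

def isKb : MQ → Bool
  | .k0 => true | .k1 => true | .k2 => true | _ => false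

def isQ1b : MQ → Bool
  | .q1Z _ _ => true | .q1M _ => true | _ => false

def isQ2b : MQ → Bool
  | .q2Z _ => true | .q2M _ _ => true | _ => false

def isQb (q : MQ) : Bool := isQ1b q || isQ2b q

/-- `x` and `y` are states of the same `q`-letter (both `q₁` or both `q₂`). -/
def famEqb (x y : MQ) : Bool := (isQ1b x && isQ1b y) || (isQ2b x && isQ2b y)

/-- The width `‖W‖` of an admissible word: `3 + |u| + 2|v|` for words of the
form `q⁻¹uqvk` or `kvquq⁻¹`, and `|W|` otherwise. -/
def mwidth (W : AdmWord MM) : ℕ :=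
  match W.qs, W.tapes with
  | [(x, false), (y, true), (z, true)], [u, v] =>
      if famEqb x y && isKb z then 3 + u.length + 2 * v.length else wlen W
  | [(z, true), (y, true), (x, false)], [v, u] =>
      if isKb z && famEqb y x then 3 + u.length + 2 * v.length else wlen W
  | _, _ => wlen W

/- base patterns -/

def bKQQ (W : AdmWord MM) : Prop :=
  ∃ k x y, isKb k ∧ famEqb x y ∧ W.qs = [(k, true), (x, true), (y, false)]

def bQQQ (W : AdmWord MM) : Prop :=
  ∃ x y z, famEqb x y ∧ famEqb y z ∧ W.qs = [(x, true), (y, false), (z, true)]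

def bKQK (W : AdmWord MM) : Prop :=
  ∃ k x k', isKb k ∧ isQb x ∧ isKb k' ∧ W.qs = [(k, true), (x, true), (k', true)]

def bQQK (W : AdmWord MM) : Prop :=
  ∃ x y k, famEqb x y ∧ isKb k ∧ W.qs = [(x, false), (y, true), (k, true)]

def bKK (W : AdmWord MM) : Prop :=
  ∃ k, isKb k ∧ W.qs = [(k, false), (k, true)]

def bKKi (W : AdmWord MM) : Prop :=
  ∃ k, isKb k ∧ W.qs = [(k, true), (k, false)]

def bK2K0 (W : AdmWord MM) : Prop := W.qs = [(MQ.k2, true), (MQ.k0, true)]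

def base7 (W : AdmWord MM) : Prop :=
  bKQQ W ∨ bKK W ∨ bQQQ W ∨ bKQK W ∨ bQQK W ∨ bKKi W ∨ bK2K0 W

def base6 (W : AdmWord MM) : Prop :=
  bKQQ W ∨ bKK W ∨ bQQQ W ∨ bKQK W ∨ bQQK W ∨ bKKi W

/-- Bases `k₀q₁k₁q₂k₂`, `k₁q₂k₂k₀q₁k₁`, `k₂k₀q₁k₁q₂k₂`. -/
def bigBase (W : AdmWord MM) : Prop :=
  (∃ x y, isQ1b x ∧ isQ2b y ∧
    W.qs = [(MQ.k0, true), (x, true), (MQ.k1, true), (y, true), (MQ.k2, true)]) ∨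
  (∃ x y, isQ2b x ∧ isQ1b y ∧
    W.qs = [(MQ.k1, true), (x, true), (MQ.k2, true), (MQ.k0, true), (y, true), (MQ.k1, true)]) ∨
  (∃ x y, isQ1b x ∧ isQ2b y ∧
    W.qs = [(MQ.k2, true), (MQ.k0, true), (x, true), (MQ.k1, true), (y, true), (MQ.k2, true)])

/-- The number of tape letters of `W` in the sectors `k₀q₁` and `q₁k₁`
(the restriction of `W` to the subbase `k₀q₁k₁`). -/
def alenLo (W : AdmWord MM) : ℕ :=
  ((List.range W.tapes.length).map fun j =>
    if secR MM (qd W.qs j) < 2 then (W.tapes.getD j []).length else 0).sum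

/-- The number of tape letters of `W` in the sectors `k₁q₂` and `q₂k₂`
(the restriction of `W` to the subbase `k₁q₂k₂`). -/
def alenHi (W : AdmWord MM) : ℕ :=
  ((List.range W.tapes.length).map fun j =>
    if 2 ≤ secR MM (qd W.qs j) ∧ secR MM (qd W.qs j) < 4
    then (W.tapes.getD j []).length else 0).sum

/-- Base of the form `k…k` where the first and the last `k`-letters coincide. -/
def baseKK (W : AdmWord MM) : Prop :=
  2 ≤ W.qs.length ∧ ∃ k, isKb k ∧ W.qs.head? = some (k, true) ∧
    W.qs.getLast? = some (k, true)

def noQQQ (W : AdmWord MM) : Prop :=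
  ¬ ∃ (x y z : MQ) (e : Bool), famEqb x y ∧ famEqb y z ∧
    [(x, e), (y, !e), (z, e)] <:+: W.qs

def noProperKK (W : AdmWord MM) : Prop :=
  ¬ ∃ u : List (MQ × Bool), u <:+: W.qs ∧ u ≠ W.qs ∧ 2 ≤ u.length ∧
    (∃ k, isKb k ∧ u.head? = some (k, true)) ∧
    (∃ k, isKb k ∧ u.getLast? = some (k, true))

def baseA (W : AdmWord MM) : Prop := baseKK W ∧ noQQQ W ∧ noProperKK W

/-- `gSpec n t` : there is a reduced computation of `Z({a})` of length `t`
with base `LpR` from `L a₀ⁿ p(1) R` to `L a₀ⁿ p(3) R`. -/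
def gSpec (n t : ℕ) : Prop :=
  ∃ c : ZComp Unit, c.t = t ∧
    (c.W 0).qs = [(ZQ.L, true), (ZQ.p1, true), (ZQ.R, true)] ∧
    (c.W 0).tapes = [List.replicate n (((), false), true), []] ∧
    (c.W c.t).qs = [(ZQ.L, true), (ZQ.p3, true), (ZQ.R, true)] ∧
    (c.W c.t).tapes = [List.replicate n (((), false), true), []]

/-- `g n` : the common length of the computations of `Z({a})` from
`L a₀ⁿ p(1) R` to `L a₀ⁿ p(3) R`. -/
noncomputable def g (n : ℕ) : ℕ := sInf {t | gSpec n t}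

noncomputable def log' (x : ℝ) : ℝ := max (Real.logb 2 x) 1


/-! ### Auxiliary lemmas for statement 7 -/

theorem reduce_eq_self {Y : Type} [DecidableEq Y] {w : Wrd Y} (h : IsReduced w) :
    FreeGroup.reduce w = w := by
  induction w with
  | nil => rfl
  | cons x t ih =>
    have ht : IsReduced t := h.tail
    rw [FreeGroup.reduce.cons, ih ht]
    cases t with
    | nil => rfl
    | cons y s =>
      have hxy : ¬ (y.1 = x.1 ∧ y.2 = !x.2) := (List.isChain_cons_cons.1 h).1
      have : ¬ (x.1 = y.1 ∧ x.2 = !y.2) := by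
        rintro ⟨h1, h2⟩
        exact hxy ⟨h1.symm, by rw [h2, Bool.not_not]⟩
      simp [this]

theorem mk_inj_reduced {Y : Type} [DecidableEq Y] {w1 w2 : Wrd Y}
    (h1 : IsReduced w1) (h2 : IsReduced w2)
    (h : FreeGroup.mk w1 = FreeGroup.mk w2) : w1 = w2 := by
  have := congrArg FreeGroup.toWord h
  rwa [FreeGroup.toWord_mk, FreeGroup.toWord_mk, reduce_eq_self h1, reduce_eq_self h2] at this

theorem isReduced_concat {Y : Type} {w : Wrd Y} {L x : Y × Bool}
    (h : IsReduced w) (hl : w.getLast? = some x) (hx : ¬ (L.1 = x.1 ∧ L.2 = !x.2)) :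
    IsReduced (w ++ [L]) := by
  refine List.isChain_append.2 ⟨h, List.isChain_singleton _, ?_⟩
  intro a ha b hb
  simp only [List.head?_cons, Option.mem_def, Option.some.injEq] at hb
  rw [hl] at ha
  simp only [Option.mem_def, Option.some.injEq] at ha
  subst ha hb
  exact hx

theorem isReduced_cons {Y : Type} {w : Wrd Y} {L x : Y × Bool}
    (h : IsReduced w) (hl : w.head? = some x) (hx : ¬ (x.1 = L.1 ∧ x.2 = !L.2)) :
    IsReduced (L :: w) := by
  cases w with
  | nil => simp at hl
  | cons y s =>
    simp only [List.head?_cons, Option.some.injEq] at hl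
    subst hl
    exact List.isChain_cons_cons.2 ⟨hx, h⟩

theorem mk_eq_of_step {Y : Type} {w w' : Wrd Y} (h : FreeGroup.Red.Step w w') :
    FreeGroup.mk w = FreeGroup.mk w' := by
  classical
  have h2 := FreeGroup.reduce.eq_of_red h.to_red
  calc FreeGroup.mk w = FreeGroup.mk (FreeGroup.reduce w) := (FreeGroup.reduce.self).symm
    _ = FreeGroup.mk (FreeGroup.reduce w') := by rw [h2]
    _ = FreeGroup.mk w' := FreeGroup.reduce.self

theorem mk_concat_cancel {Y : Type} (u : Wrd Y) (a : Y) (b : Bool) :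
    FreeGroup.mk (u ++ [(a, !b), (a, b)]) = FreeGroup.mk u := by
  have : FreeGroup.Red.Step (u ++ (a, !b) :: (a, !(!b)) :: []) (u ++ []) :=
    FreeGroup.Red.Step.not
  rw [Bool.not_not] at this
  simpa using mk_eq_of_step this

theorem mk_cons_cancel {Y : Type} (u : Wrd Y) (a : Y) (b : Bool) :
    FreeGroup.mk ((a, b) :: (a, !b) :: u) = FreeGroup.mk u := by
  have : FreeGroup.Red.Step ([] ++ (a, b) :: (a, !b) :: u) ([] ++ u) :=
    FreeGroup.Red.Step.not
  simpa using mk_eq_of_step this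

/-- Right push: appending one letter to a reduced word. -/
theorem pushR {Y : Type} [DecidableEq Y] {w w' : Wrd Y} {L : Y × Bool}
    (hw : IsReduced w) (hw' : IsReduced w')
    (h : FreeGroup.mk w' = FreeGroup.mk (w ++ [L])) :
    w' = w ++ [L] ∨ ∃ u, w = u ++ [(L.1, !L.2)] ∧ w' = u := by
  rcases List.eq_nil_or_concat w with rfl | ⟨u, x, hux⟩
  · left
    exact mk_inj_reduced hw' (List.isChain_singleton _) (by simpa using h)
  · rw [List.concat_eq_append] at hux
    subst hux
    by_cases hx : x = (L.1, !L.2)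
    · right
      subst hx
      refine ⟨u, rfl, ?_⟩
      apply mk_inj_reduced hw' (hw.left_of_append)
      rw [h]
      have h3 : (u ++ [(L.1, !L.2)] ++ [L]) = u ++ [(L.1, !L.2), (L.1, L.2)] := by simp
      rw [h3]
      exact mk_concat_cancel u L.1 L.2
    · left
      apply mk_inj_reduced hw' ?_ h
      refine isReduced_concat (x := x) hw (by simp) ?_
      rintro ⟨h1, h2⟩
      apply hx
      obtain ⟨x1, x2⟩ := x; obtain ⟨l1, l2⟩ := L
      simp only [] at h1 h2
      subst h1; rw [h2]; simp

/-- Left push: prepending one letter to a reduced word. -/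
theorem pushL {Y : Type} [DecidableEq Y] {w w' : Wrd Y} {L : Y × Bool}
    (hw : IsReduced w) (hw' : IsReduced w')
    (h : FreeGroup.mk w' = FreeGroup.mk (L :: w)) :
    w' = L :: w ∨ ∃ u, w = (L.1, !L.2) :: u ∧ w' = u := by
  cases w with
  | nil =>
    left
    exact mk_inj_reduced hw' (List.isChain_singleton _) (by simpa using h)
  | cons x u =>
    by_cases hx : x = (L.1, !L.2)
    · right
      subst hx
      refine ⟨u, rfl, ?_⟩
      apply mk_inj_reduced hw' hw.tail
      rw [h]
      have h3 : (L :: (L.1, !L.2) :: u) = ((L.1, L.2) :: (L.1, !L.2) :: u) := by simp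
      rw [h3]
      exact mk_cons_cancel u L.1 L.2
    · left
      apply mk_inj_reduced hw' ?_ h
      refine isReduced_cons (x := x) hw (by simp) ?_
      rintro ⟨h1, h2⟩
      apply hx
      obtain ⟨x1, x2⟩ := x; obtain ⟨l1, l2⟩ := L
      simp only [] at h1 h2
      subst h1; rw [h2]

theorem findD (t : ℕ) (dec inc : ℕ → Prop)
    (h1 : ∀ i < t, dec i ∨ inc i)
    (h2 : ∀ i, i + 1 < t → inc i → inc (i + 1)) :
    ∃ d ≤ t, (∀ i < d, dec i) ∧ (∀ i, d ≤ i → i < t → inc i) := by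
  classical
  by_cases hex : ∃ i, i < t ∧ inc i
  · set d := Nat.find hex with hd
    obtain ⟨hdt, hincd⟩ := Nat.find_spec hex
    refine ⟨d, le_of_lt hdt, fun i hi => ?_, fun i hdi hit => ?_⟩
    · exact (h1 i (lt_trans hi hdt)).resolve_right fun h =>
        Nat.find_min hex hi ⟨lt_trans hi hdt, h⟩
    · clear hd
      induction i, hdi using Nat.le_induction with
      | base => exact hincd
      | succ n hn ih => exact h2 n hit (ih (lt_trans (Nat.lt_succ_self n) hit))
  · refine ⟨t, le_rfl, fun i hi => (h1 i hi).resolve_right (fun h => hex ⟨i, hi, h⟩),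
      fun i hd hi => absurd hi (by omega)⟩

theorem wlen_eq3 {W : AdmWord MM} (h : W.qs.length = 3) :
    wlen W = 3 + ((W.tapes.getD 0 []).length + (W.tapes.getD 1 []).length) := by
  have h2 : W.tapes.length = 2 := by have := W.hlen; omega
  obtain ⟨a, b, hab⟩ := List.length_eq_two.1 h2
  simp [wlen, alen, h, hab]

/-- Core analysis of a single step with base `k₁ q k₂`. -/
theorem step_core {r : MRul} {x : MQ} {uL vL : Wrd MY}
    (hk1 : mact r .k1 = some ([], .k1, []))
    (hk2 : mact r .k2 = some ([], .k2, []))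
    (hx : mact r x = some (uL, x, vL))
    {W W' : AdmWord MM}
    (hW : W.qs = [(MQ.k1, true), (x, true), (MQ.k2, true)])
    (hs : Step MM (mrule r) W W') :
    W'.qs = W.qs ∧
    FreeGroup.mk (W'.tapes.getD 0 []) = FreeGroup.mk (W.tapes.getD 0 [] ++ uL) ∧
    FreeGroup.mk (W'.tapes.getD 1 []) = FreeGroup.mk (vL ++ W.tapes.getD 1 []) := by
  obtain ⟨hlen, -, hocc, htap⟩ := hs
  have hlen3 : W.qs.length = 3 := by rw [hW]; rfl
  have hq0 : qd W.qs 0 = (MQ.k1, true) := by simp [qd, hW]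
  have hq1 : qd W.qs 1 = (x, true) := by simp [qd, hW]
  have hq2 : qd W.qs 2 = (MQ.k2, true) := by simp [qd, hW]
  have ho0 : occRepl (mrule r) (qd W.qs 0) = some ([], (MQ.k1, true), []) := by
    rw [hq0]; simp [occRepl, mrule, hk1]
  have ho1 : occRepl (mrule r) (qd W.qs 1) = some (uL, (x, true), vL) := by
    rw [hq1]; simp [occRepl, mrule, hx]
  have ho2 : occRepl (mrule r) (qd W.qs 2) = some ([], (MQ.k2, true), []) := by
    rw [hq2]; simp [occRepl, mrule, hk2]
  obtain ⟨u0, v0, he0⟩ := hocc 0 (by omega)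
  obtain ⟨u1, v1, he1⟩ := hocc 1 (by omega)
  obtain ⟨u2, v2, he2⟩ := hocc 2 (by omega)
  rw [ho0] at he0; rw [ho1] at he1; rw [ho2] at he2
  simp only [Option.some.injEq, Prod.mk.injEq] at he0 he1 he2
  have hq0' : qd W'.qs 0 = (MQ.k1, true) := he0.2.1.symm
  have hq1' : qd W'.qs 1 = (x, true) := he1.2.1.symm
  have hq2' : qd W'.qs 2 = (MQ.k2, true) := he2.2.1.symm
  have hlen3' : W'.qs.length = 3 := by omega
  obtain ⟨a, b, c', habc⟩ := List.length_eq_three.1 hlen3'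
  have ha : a = (MQ.k1, true) := by rw [habc] at hq0'; simpa [qd] using hq0'
  have hbb : b = (x, true) := by rw [habc] at hq1'; simpa [qd] using hq1'
  have hc : c' = (MQ.k2, true) := by rw [habc] at hq2'; simpa [qd] using hq2'
  have hqs' : W'.qs = W.qs := by rw [habc, ha, hbb, hc, hW]
  refine ⟨hqs', ?_, ?_⟩
  · have := htap 0 (by omega) [] [] uL vL (by rw [hq0']; exact ho0) (by rw [hq1']; exact ho1)
    simpa using this
  · have := htap 1 (by omega) uL vL [] [] (by rw [hq1']; exact ho1) (by rw [hq2']; exact ho2)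
    simpa using this

theorem age_a1 {r : MRul} (h : age r = .a1) : ∃ τ b, r = .ag1 τ b := by
  cases r <;> first | exact ⟨_, _, rfl⟩ | simp [age] at h

theorem age_a2 {r : MRul} (h : age r = .a2) : ∃ τ b, r = .ag2 τ b := by
  cases r <;> first | exact ⟨_, _, rfl⟩ | simp [age] at h

theorem age_a5 {r : MRul} (h : age r = .a5) : ∃ τ b, r = .ag5 τ b := by
  cases r <;> first | exact ⟨_, _, rfl⟩ | simp [age] at h

theorem age_a6 {r : MRul} (h : age r = .a6) : ∃ τ b, r = .ag6 τ b := by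
  cases r <;> first | exact ⟨_, _, rfl⟩ | simp [age] at h

theorem mid_some (c : MComp) {i : ℕ} (hi : i < c.t) {x : MQ}
    (hq : (c.W i).qs = [(MQ.k1, true), (x, true), (MQ.k2, true)]) :
    mact (c.h i) x ≠ none := by
  obtain ⟨-, -, hocc, -⟩ := c.steps i hi
  obtain ⟨u, v, he⟩ := hocc 1 (by simp [hq])
  have hqd : qd (c.W i).qs 1 = (x, true) := by simp [qd, hq]
  rw [hqd] at he
  intro hn
  have : occRepl (mrule (c.h i)) (x, true) = none := by
    simp [occRepl, mrule, hn]
  rw [this] at he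
  simp at he

/-- Step lemma for the age (1) case: middle state `q₂¹`. -/
theorem step1 (c : MComp) {i : ℕ} (hi : i < c.t)
    (hage : age (c.h i) = .a1 ∨ age (c.h i) = .a6)
    (hq : (c.W i).qs = [(MQ.k1, true), (MQ.q2Z 1, true), (MQ.k2, true)]) :
    ∃ τ b, c.h i = .ag1 τ b ∧ (c.W (i+1)).qs = (c.W i).qs ∧
      FreeGroup.mk ((c.W (i+1)).tapes.getD 0 []) =
        FreeGroup.mk ((c.W i).tapes.getD 0 [] ++ [(MY.su τ false, !b)]) ∧
      (c.W (i+1)).tapes.getD 1 [] = (c.W i).tapes.getD 1 [] := by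
  have hcl : ∃ τ b, c.h i = .ag1 τ b := by
    rcases hage with h | h
    · exact age_a1 h
    · obtain ⟨τ, b, hr⟩ := age_a6 h
      exact absurd (by rw [hr]; rfl) (mid_some c hi hq)
  obtain ⟨τ, b, hr⟩ := hcl
  have hs := c.steps i hi
  rw [hr] at hs
  obtain ⟨hqs', h0, h1⟩ := step_core (r := .ag1 τ b) (x := .q2Z 1) rfl rfl rfl hq hs
  refine ⟨τ, b, hr, hqs', h0, ?_⟩
  exact mk_inj_reduced ((c.W (i+1)).tred 1) ((c.W i).tred 1) (by simpa using h1)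

/-- Step lemma for the age (6) case: middle state `q₂⁶`. -/
theorem step6 (c : MComp) {i : ℕ} (hi : i < c.t)
    (hage : age (c.h i) = .a1 ∨ age (c.h i) = .a6)
    (hq : (c.W i).qs = [(MQ.k1, true), (MQ.q2Z 6, true), (MQ.k2, true)]) :
    ∃ τ b, c.h i = .ag6 τ b ∧ (c.W (i+1)).qs = (c.W i).qs ∧
      FreeGroup.mk ((c.W (i+1)).tapes.getD 1 []) =
        FreeGroup.mk ((MY.su τ false, !b) :: (c.W i).tapes.getD 1 []) ∧
      (c.W (i+1)).tapes.getD 0 [] = (c.W i).tapes.getD 0 [] := by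
  have hcl : ∃ τ b, c.h i = .ag6 τ b := by
    rcases hage with h | h
    · obtain ⟨τ, b, hr⟩ := age_a1 h
      exact absurd (by rw [hr]; rfl) (mid_some c hi hq)
    · exact age_a6 h
  obtain ⟨τ, b, hr⟩ := hcl
  have hs := c.steps i hi
  rw [hr] at hs
  obtain ⟨hqs', h0, h1⟩ := step_core (r := .ag6 τ b) (x := .q2Z 6) rfl rfl rfl hq hs
  refine ⟨τ, b, hr, hqs', by simpa using h1, ?_⟩
  exact mk_inj_reduced ((c.W (i+1)).tred 0) ((c.W i).tred 0) (by simpa using h0)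

/-- Step lemma for the age (2) case: middle state `q₂²`. -/
theorem step2 (c : MComp) {i : ℕ} (hi : i < c.t)
    (hage : age (c.h i) = .a2 ∨ age (c.h i) = .a5)
    (hq : (c.W i).qs = [(MQ.k1, true), (MQ.q2Z 2, true), (MQ.k2, true)]) :
    ∃ τ b, c.h i = .ag2 τ b ∧ (c.W (i+1)).qs = (c.W i).qs ∧
      FreeGroup.mk ((c.W (i+1)).tapes.getD 0 []) =
        FreeGroup.mk ((c.W i).tapes.getD 0 [] ++ [(MY.su τ false, !b)]) ∧
      FreeGroup.mk ((c.W (i+1)).tapes.getD 1 []) =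
        FreeGroup.mk ((MY.su τ false, b) :: (c.W i).tapes.getD 1 []) := by
  have hcl : ∃ τ b, c.h i = .ag2 τ b := by
    rcases hage with h | h
    · exact age_a2 h
    · obtain ⟨τ, b, hr⟩ := age_a5 h
      exact absurd (by rw [hr]; rfl) (mid_some c hi hq)
  obtain ⟨τ, b, hr⟩ := hcl
  have hs := c.steps i hi
  rw [hr] at hs
  obtain ⟨hqs', h0, h1⟩ := step_core (r := .ag2 τ b) (x := .q2Z 2) rfl rfl rfl hq hs
  exact ⟨τ, b, hr, hqs', h0, by simpa using h1⟩

/-- Step lemma for the age (5) case: middle state `q₂⁵`. -/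
theorem step5 (c : MComp) {i : ℕ} (hi : i < c.t)
    (hage : age (c.h i) = .a2 ∨ age (c.h i) = .a5)
    (hq : (c.W i).qs = [(MQ.k1, true), (MQ.q2Z 5, true), (MQ.k2, true)]) :
    ∃ τ b, c.h i = .ag5 τ b ∧ (c.W (i+1)).qs = (c.W i).qs ∧
      FreeGroup.mk ((c.W (i+1)).tapes.getD 0 []) =
        FreeGroup.mk ((c.W i).tapes.getD 0 [] ++ [(MY.su τ false, b)]) ∧
      FreeGroup.mk ((c.W (i+1)).tapes.getD 1 []) =
        FreeGroup.mk ((MY.su τ false, !b) :: (c.W i).tapes.getD 1 []) := by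
  have hcl : ∃ τ b, c.h i = .ag5 τ b := by
    rcases hage with h | h
    · obtain ⟨τ, b, hr⟩ := age_a2 h
      exact absurd (by rw [hr]; rfl) (mid_some c hi hq)
    · exact age_a5 h
  obtain ⟨τ, b, hr⟩ := hcl
  have hs := c.steps i hi
  rw [hr] at hs
  obtain ⟨hqs', h0, h1⟩ := step_core (r := .ag5 τ b) (x := .q2Z 5) rfl rfl rfl hq hs
  exact ⟨τ, b, hr, hqs', h0, by simpa using h1⟩

theorem case1 (c : MComp)
    (hage : ∀ i < c.t, age (c.h i) = .a1 ∨ age (c.h i) = .a6)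
    (hq0 : (c.W 0).qs = [(MQ.k1, true), (MQ.q2Z 1, true), (MQ.k2, true)]) :
    ∃ d, d ≤ c.t ∧ (∀ i < d, wlen (c.W (i + 1)) < wlen (c.W i)) ∧
      (∀ i, d ≤ i → i < c.t → wlen (c.W i) < wlen (c.W (i + 1))) := by
  have inv : ∀ i, i ≤ c.t →
      (c.W i).qs = [(MQ.k1, true), (MQ.q2Z 1, true), (MQ.k2, true)] := by
    intro i
    induction i with
    | zero => exact fun _ => hq0
    | succ n ih =>
      intro hn
      have hn' : n < c.t := hn
      obtain ⟨τ, b, -, hqs, -, -⟩ := step1 c hn' (hage n hn') (ih (le_of_lt hn'))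
      rw [hqs]; exact ih (le_of_lt hn')
  have hw3 : ∀ i, i ≤ c.t → wlen (c.W i) =
      3 + (((c.W i).tapes.getD 0 []).length + ((c.W i).tapes.getD 1 []).length) :=
    fun i hi => wlen_eq3 (by rw [inv i hi]; rfl)
  set A : ℕ → MY × Bool := fun i => match c.h i with
    | .ag1 τ b => (MY.su τ false, !b)
    | _ => (MY.sa false, true) with hA
  have hdata : ∀ i < c.t,
      FreeGroup.mk ((c.W (i+1)).tapes.getD 0 []) =
        FreeGroup.mk ((c.W i).tapes.getD 0 [] ++ [A i]) ∧
      (c.W (i+1)).tapes.getD 1 [] = (c.W i).tapes.getD 1 [] := by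
    intro i hi
    obtain ⟨τ, b, hr, -, h0, h1⟩ := step1 c hi (hage i hi) (inv i (le_of_lt hi))
    have hAi : A i = (MY.su τ false, !b) := by rw [hA]; simp only [hr]
    rw [hAi]
    exact ⟨h0, h1⟩
  have hni : ∀ i, i + 1 < c.t → ¬ (A i = ((A (i+1)).1, !(A (i+1)).2)) := by
    intro i hi1 hEq
    have hi : i < c.t := by omega
    obtain ⟨τ, b, hr, -⟩ := step1 c hi (hage i hi) (inv i (le_of_lt hi))
    obtain ⟨τ', b', hr', -⟩ := step1 c hi1 (hage _ hi1) (inv _ (le_of_lt hi1))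
    have hAi : A i = (MY.su τ false, !b) := by rw [hA]; simp only [hr]
    have hAi' : A (i+1) = (MY.su τ' false, !b') := by rw [hA]; simp only [hr']
    rw [hAi, hAi'] at hEq
    simp only [Prod.mk.injEq, MY.su.injEq, Bool.not_not] at hEq
    obtain ⟨⟨hττ, -⟩, hbb⟩ := hEq
    apply c.red i hi1
    rw [hr', hr]
    subst hττ
    rw [← hbb]
    rfl
  have h1 : ∀ i < c.t, (wlen (c.W (i+1)) < wlen (c.W i)) ∨
      ((c.W (i+1)).tapes.getD 0 [] = (c.W i).tapes.getD 0 [] ++ [A i]) := by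
    intro i hi
    obtain ⟨hmk, ht1⟩ := hdata i hi
    rcases pushR ((c.W i).tred 0) ((c.W (i+1)).tred 0) hmk with h | ⟨u, hu, hu'⟩
    · right; exact h
    · left
      rw [hw3 i (le_of_lt hi), hw3 (i+1) (by omega), hu, hu', ht1]
      simp only [List.length_append, List.length_cons, List.length_nil]
      omega
  have h2 : ∀ i, i + 1 < c.t →
      ((c.W (i+1)).tapes.getD 0 [] = (c.W i).tapes.getD 0 [] ++ [A i]) →
      ((c.W (i+1+1)).tapes.getD 0 [] = (c.W (i+1)).tapes.getD 0 [] ++ [A (i+1)]) := by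
    intro i hi1 hinc
    obtain ⟨hmk, -⟩ := hdata (i+1) hi1
    rcases pushR ((c.W (i+1)).tred 0) ((c.W (i+2)).tred 0) hmk with h | ⟨u, hu, hu'⟩
    · exact h
    · exfalso
      apply hni i hi1
      rw [hinc] at hu
      have h3 : some (A i) = some ((A (i+1)).1, !(A (i+1)).2) := by
        rw [← List.getLast?_concat (l := (c.W i).tapes.getD 0 []),
          ← List.getLast?_concat (l := u), hu]
      exact Option.some.inj h3
  obtain ⟨d, hd, hdec, hinc⟩ := findD c.t _ _ h1 h2
  refine ⟨d, hd, hdec, fun i hdi hit => ?_⟩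
  have h := hinc i hdi hit
  obtain ⟨-, ht1⟩ := hdata i hit
  rw [hw3 i (le_of_lt hit), hw3 (i+1) (by omega), h, ht1]
  simp only [List.length_append, List.length_cons, List.length_nil]
  omega

theorem case6 (c : MComp)
    (hage : ∀ i < c.t, age (c.h i) = .a1 ∨ age (c.h i) = .a6)
    (hq0 : (c.W 0).qs = [(MQ.k1, true), (MQ.q2Z 6, true), (MQ.k2, true)]) :
    ∃ d, d ≤ c.t ∧ (∀ i < d, wlen (c.W (i + 1)) < wlen (c.W i)) ∧
      (∀ i, d ≤ i → i < c.t → wlen (c.W i) < wlen (c.W (i + 1))) := by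
  have inv : ∀ i, i ≤ c.t →
      (c.W i).qs = [(MQ.k1, true), (MQ.q2Z 6, true), (MQ.k2, true)] := by
    intro i
    induction i with
    | zero => exact fun _ => hq0
    | succ n ih =>
      intro hn
      have hn' : n < c.t := hn
      obtain ⟨τ, b, -, hqs, -, -⟩ := step6 c hn' (hage n hn') (ih (le_of_lt hn'))
      rw [hqs]; exact ih (le_of_lt hn')
  have hw3 : ∀ i, i ≤ c.t → wlen (c.W i) =
      3 + (((c.W i).tapes.getD 0 []).length + ((c.W i).tapes.getD 1 []).length) :=
    fun i hi => wlen_eq3 (by rw [inv i hi]; rfl)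
  set A : ℕ → MY × Bool := fun i => match c.h i with
    | .ag6 τ b => (MY.su τ false, !b)
    | _ => (MY.sa false, true) with hA
  have hdata : ∀ i < c.t,
      FreeGroup.mk ((c.W (i+1)).tapes.getD 1 []) =
        FreeGroup.mk (A i :: (c.W i).tapes.getD 1 []) ∧
      (c.W (i+1)).tapes.getD 0 [] = (c.W i).tapes.getD 0 [] := by
    intro i hi
    obtain ⟨τ, b, hr, -, h1, h0⟩ := step6 c hi (hage i hi) (inv i (le_of_lt hi))
    have hAi : A i = (MY.su τ false, !b) := by rw [hA]; simp only [hr]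
    rw [hAi]
    exact ⟨h1, h0⟩
  have hni : ∀ i, i + 1 < c.t → ¬ (A i = ((A (i+1)).1, !(A (i+1)).2)) := by
    intro i hi1 hEq
    have hi : i < c.t := by omega
    obtain ⟨τ, b, hr, -⟩ := step6 c hi (hage i hi) (inv i (le_of_lt hi))
    obtain ⟨τ', b', hr', -⟩ := step6 c hi1 (hage _ hi1) (inv _ (le_of_lt hi1))
    have hAi : A i = (MY.su τ false, !b) := by rw [hA]; simp only [hr]
    have hAi' : A (i+1) = (MY.su τ' false, !b') := by rw [hA]; simp only [hr']
    rw [hAi, hAi'] at hEq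
    simp only [Prod.mk.injEq, MY.su.injEq, Bool.not_not] at hEq
    obtain ⟨⟨hττ, -⟩, hbb⟩ := hEq
    apply c.red i hi1
    rw [hr', hr]
    subst hττ
    rw [← hbb]
    rfl
  have h1 : ∀ i < c.t, (wlen (c.W (i+1)) < wlen (c.W i)) ∨
      ((c.W (i+1)).tapes.getD 1 [] = A i :: (c.W i).tapes.getD 1 []) := by
    intro i hi
    obtain ⟨hmk, ht0⟩ := hdata i hi
    rcases pushL ((c.W i).tred 1) ((c.W (i+1)).tred 1) hmk with h | ⟨u, hu, hu'⟩
    · right; exact h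
    · left
      rw [hw3 i (le_of_lt hi), hw3 (i+1) (by omega), hu, hu', ht0]
      simp only [List.length_cons]
      omega
  have h2 : ∀ i, i + 1 < c.t →
      ((c.W (i+1)).tapes.getD 1 [] = A i :: (c.W i).tapes.getD 1 []) →
      ((c.W (i+1+1)).tapes.getD 1 [] = A (i+1) :: (c.W (i+1)).tapes.getD 1 []) := by
    intro i hi1 hinc
    obtain ⟨hmk, -⟩ := hdata (i+1) hi1
    rcases pushL ((c.W (i+1)).tred 1) ((c.W (i+2)).tred 1) hmk with h | ⟨u, hu, hu'⟩
    · exact h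
    · exfalso
      apply hni i hi1
      rw [hinc] at hu
      exact (List.cons.injEq _ _ _ _ ▸ hu).1
  obtain ⟨d, hd, hdec, hinc⟩ := findD c.t _ _ h1 h2
  refine ⟨d, hd, hdec, fun i hdi hit => ?_⟩
  have h := hinc i hdi hit
  obtain ⟨-, ht0⟩ := hdata i hit
  rw [hw3 i (le_of_lt hit), hw3 (i+1) (by omega), h, ht0]
  simp only [List.length_cons]
  omega

theorem case2 (c : MComp)
    (hage : ∀ i < c.t, age (c.h i) = .a2 ∨ age (c.h i) = .a5)
    (hq0 : (c.W 0).qs = [(MQ.k1, true), (MQ.q2Z 2, true), (MQ.k2, true)]) :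
    ∃ d, d ≤ c.t ∧ (∀ i < d, wlen (c.W (i + 1)) ≤ wlen (c.W i)) ∧
      (∀ i, d ≤ i → i < c.t → wlen (c.W i) ≤ wlen (c.W (i + 1))) := by
  have inv : ∀ i, i ≤ c.t →
      (c.W i).qs = [(MQ.k1, true), (MQ.q2Z 2, true), (MQ.k2, true)] := by
    intro i
    induction i with
    | zero => exact fun _ => hq0
    | succ n ih =>
      intro hn
      have hn' : n < c.t := hn
      obtain ⟨τ, b, -, hqs, -, -⟩ := step2 c hn' (hage n hn') (ih (le_of_lt hn'))
      rw [hqs]; exact ih (le_of_lt hn')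
  have hw3 : ∀ i, i ≤ c.t → wlen (c.W i) =
      3 + (((c.W i).tapes.getD 0 []).length + ((c.W i).tapes.getD 1 []).length) :=
    fun i hi => wlen_eq3 (by rw [inv i hi]; rfl)
  set A0 : ℕ → MY × Bool := fun i => match c.h i with
    | .ag2 τ b => (MY.su τ false, !b)
    | _ => (MY.sa false, true) with hA0
  set A1 : ℕ → MY × Bool := fun i => match c.h i with
    | .ag2 τ b => (MY.su τ false, b)
    | _ => (MY.sa false, true) with hA1
  have hdata : ∀ i < c.t,
      FreeGroup.mk ((c.W (i+1)).tapes.getD 0 []) =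
        FreeGroup.mk ((c.W i).tapes.getD 0 [] ++ [A0 i]) ∧
      FreeGroup.mk ((c.W (i+1)).tapes.getD 1 []) =
        FreeGroup.mk (A1 i :: (c.W i).tapes.getD 1 []) := by
    intro i hi
    obtain ⟨τ, b, hr, -, h0, h1⟩ := step2 c hi (hage i hi) (inv i (le_of_lt hi))
    have hAi0 : A0 i = (MY.su τ false, !b) := by rw [hA0]; simp only [hr]
    have hAi1 : A1 i = (MY.su τ false, b) := by rw [hA1]; simp only [hr]
    rw [hAi0, hAi1]
    exact ⟨h0, h1⟩
  have hni : ∀ i, i + 1 < c.t →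
      ¬ (A0 i = ((A0 (i+1)).1, !(A0 (i+1)).2)) ∧
      ¬ (A1 i = ((A1 (i+1)).1, !(A1 (i+1)).2)) := by
    intro i hi1
    have hi : i < c.t := by omega
    obtain ⟨τ, b, hr, -⟩ := step2 c hi (hage i hi) (inv i (le_of_lt hi))
    obtain ⟨τ', b', hr', -⟩ := step2 c hi1 (hage _ hi1) (inv _ (le_of_lt hi1))
    have hAi0 : A0 i = (MY.su τ false, !b) := by rw [hA0]; simp only [hr]
    have hAi0' : A0 (i+1) = (MY.su τ' false, !b') := by rw [hA0]; simp only [hr']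
    have hAi1 : A1 i = (MY.su τ false, b) := by rw [hA1]; simp only [hr]
    have hAi1' : A1 (i+1) = (MY.su τ' false, b') := by rw [hA1]; simp only [hr']
    constructor
    · intro hEq
      rw [hAi0, hAi0'] at hEq
      simp only [Prod.mk.injEq, MY.su.injEq, Bool.not_not] at hEq
      obtain ⟨⟨hττ, -⟩, hbb⟩ := hEq
      apply c.red i hi1
      rw [hr', hr]
      subst hττ
      rw [← hbb]
      rfl
    · intro hEq
      rw [hAi1, hAi1'] at hEq
      simp only [Prod.mk.injEq, MY.su.injEq, Bool.not_not] at hEq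
      obtain ⟨⟨hττ, -⟩, hbb⟩ := hEq
      apply c.red i hi1
      rw [hr', hr]
      subst hττ
      rw [hbb]
      simp [minv]
  have h1 : ∀ i < c.t, (wlen (c.W (i+1)) ≤ wlen (c.W i)) ∨
      ((c.W (i+1)).tapes.getD 0 [] = (c.W i).tapes.getD 0 [] ++ [A0 i] ∧
       (c.W (i+1)).tapes.getD 1 [] = A1 i :: (c.W i).tapes.getD 1 []) := by
    intro i hi
    obtain ⟨hmk0, hmk1⟩ := hdata i hi
    rcases pushR ((c.W i).tred 0) ((c.W (i+1)).tred 0) hmk0 with h0 | ⟨u0, hu0, hu0'⟩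
    · rcases pushL ((c.W i).tred 1) ((c.W (i+1)).tred 1) hmk1 with h1' | ⟨u1, hu1, hu1'⟩
      · right; exact ⟨h0, h1'⟩
      · left
        rw [hw3 i (le_of_lt hi), hw3 (i+1) (by omega), h0, hu1, hu1']
        simp only [List.length_append, List.length_cons, List.length_nil]
        omega
    · left
      have ht1 : ((c.W (i+1)).tapes.getD 1 []).length ≤
          ((c.W i).tapes.getD 1 []).length + 1 := by
        rcases pushL ((c.W i).tred 1) ((c.W (i+1)).tred 1) hmk1 with h1' | ⟨u1, hu1, hu1'⟩
        · rw [h1']; simp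
        · rw [hu1, hu1']; simp only [List.length_cons]; omega
      rw [hw3 i (le_of_lt hi), hw3 (i+1) (by omega), hu0, hu0']
      simp only [List.length_append, List.length_cons, List.length_nil] at *
      omega
  have h2 : ∀ i, i + 1 < c.t →
      ((c.W (i+1)).tapes.getD 0 [] = (c.W i).tapes.getD 0 [] ++ [A0 i] ∧
       (c.W (i+1)).tapes.getD 1 [] = A1 i :: (c.W i).tapes.getD 1 []) →
      ((c.W (i+1+1)).tapes.getD 0 [] = (c.W (i+1)).tapes.getD 0 [] ++ [A0 (i+1)] ∧
       (c.W (i+1+1)).tapes.getD 1 [] = A1 (i+1) :: (c.W (i+1)).tapes.getD 1 []) := by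
    rintro i hi1 ⟨hinc0, hinc1⟩
    obtain ⟨hmk0, hmk1⟩ := hdata (i+1) hi1
    constructor
    · rcases pushR ((c.W (i+1)).tred 0) ((c.W (i+2)).tred 0) hmk0 with h | ⟨u, hu, hu'⟩
      · exact h
      · exfalso
        apply (hni i hi1).1
        rw [hinc0] at hu
        have h3 : some (A0 i) = some ((A0 (i+1)).1, !(A0 (i+1)).2) := by
          rw [← List.getLast?_concat (l := (c.W i).tapes.getD 0 []),
            ← List.getLast?_concat (l := u), hu]
        exact Option.some.inj h3
    · rcases pushL ((c.W (i+1)).tred 1) ((c.W (i+2)).tred 1) hmk1 with h | ⟨u, hu, hu'⟩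
      · exact h
      · exfalso
        apply (hni i hi1).2
        rw [hinc1] at hu
        exact (List.cons.injEq _ _ _ _ ▸ hu).1
  obtain ⟨d, hd, hdec, hinc⟩ := findD c.t _ _ h1 h2
  refine ⟨d, hd, hdec, fun i hdi hit => ?_⟩
  obtain ⟨h0, h1'⟩ := hinc i hdi hit
  rw [hw3 i (le_of_lt hit), hw3 (i+1) (by omega), h0, h1']
  simp only [List.length_append, List.length_cons, List.length_nil]
  omega

theorem case5 (c : MComp)
    (hage : ∀ i < c.t, age (c.h i) = .a2 ∨ age (c.h i) = .a5)
    (hq0 : (c.W 0).qs = [(MQ.k1, true), (MQ.q2Z 5, true), (MQ.k2, true)]) :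
    ∃ d, d ≤ c.t ∧ (∀ i < d, wlen (c.W (i + 1)) ≤ wlen (c.W i)) ∧
      (∀ i, d ≤ i → i < c.t → wlen (c.W i) ≤ wlen (c.W (i + 1))) := by
  have inv : ∀ i, i ≤ c.t →
      (c.W i).qs = [(MQ.k1, true), (MQ.q2Z 5, true), (MQ.k2, true)] := by
    intro i
    induction i with
    | zero => exact fun _ => hq0
    | succ n ih =>
      intro hn
      have hn' : n < c.t := hn
      obtain ⟨τ, b, -, hqs, -, -⟩ := step5 c hn' (hage n hn') (ih (le_of_lt hn'))
      rw [hqs]; exact ih (le_of_lt hn')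
  have hw3 : ∀ i, i ≤ c.t → wlen (c.W i) =
      3 + (((c.W i).tapes.getD 0 []).length + ((c.W i).tapes.getD 1 []).length) :=
    fun i hi => wlen_eq3 (by rw [inv i hi]; rfl)
  set A0 : ℕ → MY × Bool := fun i => match c.h i with
    | .ag5 τ b => (MY.su τ false, b)
    | _ => (MY.sa false, true) with hA0
  set A1 : ℕ → MY × Bool := fun i => match c.h i with
    | .ag5 τ b => (MY.su τ false, !b)
    | _ => (MY.sa false, true) with hA1
  have hdata : ∀ i < c.t,
      FreeGroup.mk ((c.W (i+1)).tapes.getD 0 []) =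
        FreeGroup.mk ((c.W i).tapes.getD 0 [] ++ [A0 i]) ∧
      FreeGroup.mk ((c.W (i+1)).tapes.getD 1 []) =
        FreeGroup.mk (A1 i :: (c.W i).tapes.getD 1 []) := by
    intro i hi
    obtain ⟨τ, b, hr, -, h0, h1⟩ := step5 c hi (hage i hi) (inv i (le_of_lt hi))
    have hAi0 : A0 i = (MY.su τ false, b) := by rw [hA0]; simp only [hr]
    have hAi1 : A1 i = (MY.su τ false, !b) := by rw [hA1]; simp only [hr]
    rw [hAi0, hAi1]
    exact ⟨h0, h1⟩
  have hni : ∀ i, i + 1 < c.t →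
      ¬ (A0 i = ((A0 (i+1)).1, !(A0 (i+1)).2)) ∧
      ¬ (A1 i = ((A1 (i+1)).1, !(A1 (i+1)).2)) := by
    intro i hi1
    have hi : i < c.t := by omega
    obtain ⟨τ, b, hr, -⟩ := step5 c hi (hage i hi) (inv i (le_of_lt hi))
    obtain ⟨τ', b', hr', -⟩ := step5 c hi1 (hage _ hi1) (inv _ (le_of_lt hi1))
    have hAi0 : A0 i = (MY.su τ false, b) := by rw [hA0]; simp only [hr]
    have hAi0' : A0 (i+1) = (MY.su τ' false, b') := by rw [hA0]; simp only [hr']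
    have hAi1 : A1 i = (MY.su τ false, !b) := by rw [hA1]; simp only [hr]
    have hAi1' : A1 (i+1) = (MY.su τ' false, !b') := by rw [hA1]; simp only [hr']
    constructor
    · intro hEq
      rw [hAi0, hAi0'] at hEq
      simp only [Prod.mk.injEq, MY.su.injEq, Bool.not_not] at hEq
      obtain ⟨⟨hττ, -⟩, hbb⟩ := hEq
      apply c.red i hi1
      rw [hr', hr]
      subst hττ
      rw [hbb]
      simp [minv]
    · intro hEq
      rw [hAi1, hAi1'] at hEq
      simp only [Prod.mk.injEq, MY.su.injEq, Bool.not_not] at hEq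
      obtain ⟨⟨hττ, -⟩, hbb⟩ := hEq
      apply c.red i hi1
      rw [hr', hr]
      subst hττ
      rw [← hbb]
      rfl
  have h1 : ∀ i < c.t, (wlen (c.W (i+1)) ≤ wlen (c.W i)) ∨
      ((c.W (i+1)).tapes.getD 0 [] = (c.W i).tapes.getD 0 [] ++ [A0 i] ∧
       (c.W (i+1)).tapes.getD 1 [] = A1 i :: (c.W i).tapes.getD 1 []) := by
    intro i hi
    obtain ⟨hmk0, hmk1⟩ := hdata i hi
    rcases pushR ((c.W i).tred 0) ((c.W (i+1)).tred 0) hmk0 with h0 | ⟨u0, hu0, hu0'⟩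
    · rcases pushL ((c.W i).tred 1) ((c.W (i+1)).tred 1) hmk1 with h1' | ⟨u1, hu1, hu1'⟩
      · right; exact ⟨h0, h1'⟩
      · left
        rw [hw3 i (le_of_lt hi), hw3 (i+1) (by omega), h0, hu1, hu1']
        simp only [List.length_append, List.length_cons, List.length_nil]
        omega
    · left
      have ht1 : ((c.W (i+1)).tapes.getD 1 []).length ≤
          ((c.W i).tapes.getD 1 []).length + 1 := by
        rcases pushL ((c.W i).tred 1) ((c.W (i+1)).tred 1) hmk1 with h1' | ⟨u1, hu1, hu1'⟩
        · rw [h1']; simp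
        · rw [hu1, hu1']; simp only [List.length_cons]; omega
      rw [hw3 i (le_of_lt hi), hw3 (i+1) (by omega), hu0, hu0']
      simp only [List.length_append, List.length_cons, List.length_nil] at *
      omega
  have h2 : ∀ i, i + 1 < c.t →
      ((c.W (i+1)).tapes.getD 0 [] = (c.W i).tapes.getD 0 [] ++ [A0 i] ∧
       (c.W (i+1)).tapes.getD 1 [] = A1 i :: (c.W i).tapes.getD 1 []) →
      ((c.W (i+1+1)).tapes.getD 0 [] = (c.W (i+1)).tapes.getD 0 [] ++ [A0 (i+1)] ∧
       (c.W (i+1+1)).tapes.getD 1 [] = A1 (i+1) :: (c.W (i+1)).tapes.getD 1 []) := by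
    rintro i hi1 ⟨hinc0, hinc1⟩
    obtain ⟨hmk0, hmk1⟩ := hdata (i+1) hi1
    constructor
    · rcases pushR ((c.W (i+1)).tred 0) ((c.W (i+2)).tred 0) hmk0 with h | ⟨u, hu, hu'⟩
      · exact h
      · exfalso
        apply (hni i hi1).1
        rw [hinc0] at hu
        have h3 : some (A0 i) = some ((A0 (i+1)).1, !(A0 (i+1)).2) := by
          rw [← List.getLast?_concat (l := (c.W i).tapes.getD 0 []),
            ← List.getLast?_concat (l := u), hu]
        exact Option.some.inj h3
    · rcases pushL ((c.W (i+1)).tred 1) ((c.W (i+2)).tred 1) hmk1 with h | ⟨u, hu, hu'⟩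
      · exact h
      · exfalso
        apply (hni i hi1).2
        rw [hinc1] at hu
        exact (List.cons.injEq _ _ _ _ ▸ hu).1
  obtain ⟨d, hd, hdec, hinc⟩ := findD c.t _ _ h1 h2
  refine ⟨d, hd, hdec, fun i hdi hit => ?_⟩
  obtain ⟨h0, h1'⟩ := hinc i hdi hit
  rw [hw3 i (le_of_lt hit), hw3 (i+1) (by omega), h0, h1']
  simp only [List.length_append, List.length_cons, List.length_nil]
  omega

theorem t_zero (c : MComp) {x : MQ}
    (hq0 : (c.W 0).qs = [(MQ.k1, true), (x, true), (MQ.k2, true)])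
    (hnone : 0 < c.t → mact (c.h 0) x = none) : c.t = 0 := by
  by_contra h
  have h0 : 0 < c.t := Nat.pos_of_ne_zero h
  exact mid_some c h0 hq0 (hnone h0)

theorem deg (c : MComp) (ht : c.t = 0) (P Q : ℕ → Prop) :
    ∃ d, d ≤ c.t ∧ (∀ i < d, P i) ∧ (∀ i, d ≤ i → i < c.t → Q i) :=
  ⟨0, by omega, fun i hi => absurd hi (by omega),
    fun i _ h2 => absurd (ht ▸ h2) (by omega)⟩


/-- Lemma 4.1.  For a reduced computation with base
`k₁q₂k₂` whose rules all have age (1) or (6) (resp. (2) or (5)), there is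
`d` such that lengths strictly decrease (resp. do not increase) up to `W_d`
and strictly increase (resp. do not decrease) afterwards. -/
theorem statement_7 (c : MComp)
    (hb : ∃ x, isQ2b x ∧ (c.W 0).qs = [(MQ.k1, true), (x, true), (MQ.k2, true)]) :
    ((∀ i < c.t, age (c.h i) = Age.a1 ∨ age (c.h i) = Age.a6) →
      ∃ d, d ≤ c.t ∧ (∀ i < d, wlen (c.W (i + 1)) < wlen (c.W i)) ∧
        (∀ i, d ≤ i → i < c.t → wlen (c.W i) < wlen (c.W (i + 1)))) ∧
    ((∀ i < c.t, age (c.h i) = Age.a2 ∨ age (c.h i) = Age.a5) →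
      ∃ d, d ≤ c.t ∧ (∀ i < d, wlen (c.W (i + 1)) ≤ wlen (c.W i)) ∧
        (∀ i, d ≤ i → i < c.t → wlen (c.W i) ≤ wlen (c.W (i + 1)))) := by
  obtain ⟨x, hx, hq0⟩ := hb
  constructor
  · intro hage
    by_cases e1 : x = .q2Z 1
    · subst e1; exact case1 c hage hq0
    by_cases e6 : x = .q2Z 6
    · subst e6; exact case6 c hage hq0
    have ht : c.t = 0 := by
      refine t_zero c hq0 fun h0 => ?_
      have hcl : ∃ τ b, c.h 0 = MRul.ag1 τ b ∨ c.h 0 = MRul.ag6 τ b := by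
        rcases hage 0 h0 with h | h
        · obtain ⟨τ, b, hr⟩ := age_a1 h; exact ⟨τ, b, Or.inl hr⟩
        · obtain ⟨τ, b, hr⟩ := age_a6 h; exact ⟨τ, b, Or.inr hr⟩
      obtain ⟨τ, b, hr | hr⟩ := hcl <;> rw [hr] <;>
        rcases x with _ | _ | _ | ⟨st, ag⟩ | ag | ⟨st, ag⟩ | ag <;>
        first
          | rfl
          | (rcases ag with _|_|_|_|_|_|_|ag <;>
              first | rfl | exact absurd rfl e1 | exact absurd rfl e6)
          | simp [isQ2b] at hx
    exact deg c ht _ _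
  · intro hage
    by_cases e2 : x = .q2Z 2
    · subst e2; exact case2 c hage hq0
    by_cases e5 : x = .q2Z 5
    · subst e5; exact case5 c hage hq0
    have ht : c.t = 0 := by
      refine t_zero c hq0 fun h0 => ?_
      have hcl : ∃ τ b, c.h 0 = MRul.ag2 τ b ∨ c.h 0 = MRul.ag5 τ b := by
        rcases hage 0 h0 with h | h
        · obtain ⟨τ, b, hr⟩ := age_a2 h; exact ⟨τ, b, Or.inl hr⟩
        · obtain ⟨τ, b, hr⟩ := age_a5 h; exact ⟨τ, b, Or.inr hr⟩
      obtain ⟨τ, b, hr | hr⟩ := hcl <;> rw [hr] <;>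
        rcases x with _ | _ | _ | ⟨st, ag⟩ | ag | ⟨st, ag⟩ | ag <;>
        first
          | rfl
          | (rcases ag with _|_|_|_|_|_|_|ag <;>
              first | rfl | exact absurd rfl e2 | exact absurd rfl e5)
          | simp [isQ2b] at hx
    exact deg c ht _ _


end SM
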